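/- Let C ⊂ V be a proper cone in a finite-dimensional real vector space V. Then the supremum, over all C-primitive linear maps Ψ : V → V, of the primitivity index γ(C, Ψ) is equal to the supremum, over all soles K of C and all K-primitive affine self-maps Φ of the affine hyperplane containing K, of the affine primitivity index γ_aff(K, Φ) (both suprema taken in ℕ ∪ {∞}). -/

import Mathlib

open Metric Set Function

noncomputable section

variable {V : Type*} [NormedAddCommGroup V] [NormedSpace ℝ V]

/-- A proper cone: a convex cone which is closed, salient and generating. -/
def IsProperCone (C : Set V) : Prop :=
  (∀ x ∈ C, ∀ y ∈ C, ∀ s t : ℝ, 0 ≤ s → 0 ≤ t → s • x + t • y ∈ C) ∧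
  IsClosed C ∧ (C ∩ (-C) = {0}) ∧ (∀ v : V, ∃ x ∈ C, ∃ y ∈ C, v = x - y)

/-- The dual cone, seen inside the space of continuous linear functionals. -/
def dualConeSet (C : Set V) : Set (V →L[ℝ] ℝ) := {f | ∀ x ∈ C, 0 ≤ f x}

/-- The primitivity index `γ(C, Ψ)` of a linear map, as an element of `ℕ∞`
(it equals `⊤` when no iterate is strictly positive). -/
def conePrimIndex (C : Set V) (Ψ : Module.End ℝ V) : ℕ∞ :=
  sInf ((↑) '' {k : ℕ | 1 ≤ k ∧ ∀ x ∈ C, x ≠ 0 → (Ψ ^ k) x ∈ interior C})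

/-- The affine primitivity index `γ_aff(K, Φ)` of an affine map, as an element of
`ℕ∞`; the interior of `K` is taken inside the affine subspace it spans. -/
def affPrimIndex (K : Set V) (Φ : V →ᵃ[ℝ] V) : ℕ∞ :=
  sInf ((↑) '' {k : ℕ | 1 ≤ k ∧ ∀ x ∈ K, (⇑Φ)^[k] x ∈ intrinsicInterior ℝ K})

open Pointwise Filter Topology

set_option synthInstance.maxHeartbeats 1000000
set_option maxHeartbeats 1000000

section Aux
variable {W : Type*} [NormedAddCommGroup W] [NormedSpace ℝ W]

/-- cone operations -/
def ConeOps (D : Set W) : Prop :=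
  ∀ x ∈ D, ∀ y ∈ D, ∀ s t : ℝ, 0 ≤ s → 0 ≤ t → s • x + t • y ∈ D

lemma ConeOps.smul_mem {D : Set W} (h : ConeOps D) {x : W} (hx : x ∈ D) {t : ℝ}
    (ht : 0 ≤ t) : t • x ∈ D := by
  have := h x hx x hx t 0 ht le_rfl
  simpa using this

lemma ConeOps.zero_mem {D : Set W} (h : ConeOps D) {x : W} (hx : x ∈ D) : (0:W) ∈ D := by
  have := h x hx x hx 0 0 le_rfl le_rfl
  simpa using this

lemma ConeOps.add_mem {D : Set W} (h : ConeOps D) {x y : W} (hx : x ∈ D) (hy : y ∈ D) :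
    x + y ∈ D := by
  have := h x hx y hy 1 1 zero_le_one zero_le_one
  simpa using this

lemma ConeOps.convex {D : Set W} (h : ConeOps D) : Convex ℝ D := fun x hx y hy s t hs ht _ =>
  h x hx y hy s t hs ht

lemma half_norm_smul_lt {u : W} (hu : u ≠ 0) {ε : ℝ} (hε : 0 < ε) :
    ‖(ε / (2 * ‖u‖)) • u‖ < ε := by
  have hu' : 0 < ‖u‖ := norm_pos_iff.mpr hu
  have : ‖(ε / (2 * ‖u‖)) • u‖ = ε / 2 := by
    rw [norm_smul, Real.norm_eq_abs, abs_of_pos (by positivity)]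
    field_simp
  rw [this]; linarith

/-- a nonzero nonnegative functional is positive on the interior -/
lemma pos_on_interior {D : Set W} {f : W →L[ℝ] ℝ} (hf : ∀ x ∈ D, 0 ≤ f x)
    (hfne : f ≠ 0) {y : W} (hy : y ∈ interior D) : 0 < f y := by
  rcases lt_or_eq_of_le (hf y (interior_subset hy)) with h | h
  · exact h
  exfalso
  apply hfne
  ext u
  rcases eq_or_ne u 0 with rfl | hu
  · simp
  rcases Metric.isOpen_iff.mp isOpen_interior y hy with ⟨ε, hε, hball⟩
  set t : ℝ := ε / (2 * ‖u‖) with htdef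
  have hu' : 0 < ‖u‖ := norm_pos_iff.mpr hu
  have ht : 0 < t := by positivity
  have hdist : ∀ s : ℝ, s = t ∨ s = -t → y + s • u ∈ D := by
    rintro s (rfl | rfl)
    · apply interior_subset; apply hball
      simp only [mem_ball, dist_eq_norm, add_sub_cancel_left]
      exact half_norm_smul_lt hu hε
    · apply interior_subset; apply hball
      simp only [mem_ball, dist_eq_norm, add_sub_cancel_left, neg_smul, norm_neg]
      exact half_norm_smul_lt hu hε
  have h1 := hf _ (hdist t (Or.inl rfl))
  have h2 := hf _ (hdist (-t) (Or.inr rfl))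
  simp only [map_add, map_smul, ← h, smul_eq_mul] at h1 h2
  have : f u = 0 := by nlinarith
  simpa using this

/-- positive scalings preserve the interior of a cone -/
lemma smul_interior_mem {D : Set W} (h : ConeOps D) {t : ℝ} (ht : 0 < t)
    {y : W} (hy : y ∈ interior D) : t • y ∈ interior D := by
  have hDeq : t • D = D := by
    apply Subset.antisymm
    · rintro _ ⟨x, hx, rfl⟩
      exact h.smul_mem hx ht.le
    · intro x hx
      exact ⟨t⁻¹ • x, h.smul_mem hx (by positivity), by
        show t • t⁻¹ • x = x
        rw [smul_smul, mul_inv_cancel₀ ht.ne', one_smul]⟩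
  have : t • y ∈ t • interior D := smul_mem_smul_set hy
  rwa [← interior_smul₀ ht.ne', hDeq] at this

lemma zero_not_mem_interior [Nontrivial W] {D : Set W} (hsal : D ∩ (-D) = {0}) :
    (0:W) ∉ interior D := by
  intro h0
  obtain ⟨u, hu⟩ := exists_ne (0:W)
  rcases Metric.isOpen_iff.mp isOpen_interior 0 h0 with ⟨ε, hε, hball⟩
  set v : W := (ε / (2 * ‖u‖)) • u with hv
  have hu' : 0 < ‖u‖ := norm_pos_iff.mpr hu
  have hvne : v ≠ 0 := by
    simp only [hv, smul_ne_zero_iff]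
    exact ⟨by positivity, hu⟩
  have hmem : ∀ w : W, ‖w‖ < ε → w ∈ D := fun w hw =>
    interior_subset (hball (by simpa [mem_ball, dist_eq_norm] using hw))
  have hnv : ‖v‖ < ε := half_norm_smul_lt hu hε
  have h2 : -v ∈ D := hmem (-v) (by rwa [norm_neg])
  have : v ∈ D ∩ (-D) := ⟨hmem v hnv, by simpa using h2⟩
  rw [hsal] at this
  exact hvne this

/-- lower bound for a strictly positive functional on a closed cone -/
lemma strictpos_bound [FiniteDimensional ℝ W] {D : Set W} (h : ConeOps D)
    (hcl : IsClosed D) (g : W →L[ℝ] ℝ) (hg : ∀ x ∈ D, x ≠ 0 → 0 < g x)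
    (hne : ∃ x ∈ D, x ≠ 0) : ∃ m : ℝ, 0 < m ∧ ∀ x ∈ D, m * ‖x‖ ≤ g x := by
  obtain ⟨x₁, hx₁, hx₁0⟩ := hne
  set S : Set W := D ∩ sphere 0 1 with hS
  have hScpt : IsCompact S := by
    have : Bornology.IsBounded S := (isBounded_sphere).subset inter_subset_right
    exact Metric.isCompact_of_isClosed_isBounded (hcl.inter isClosed_sphere) this
  have hSne : S.Nonempty := by
    refine ⟨‖x₁‖⁻¹ • x₁, h.smul_mem hx₁ (by positivity), ?_⟩
    simp [norm_smul, norm_pos_iff.mpr hx₁0, inv_mul_cancel₀ (norm_ne_zero_iff.mpr hx₁0)]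
  obtain ⟨x₀, hx₀S, hmin⟩ := hScpt.exists_isMinOn hSne g.continuous.continuousOn
  have hx₀0 : x₀ ≠ 0 := by
    intro hcontr
    have := hx₀S.2
    rw [hcontr] at this
    simp at this
  refine ⟨g x₀, hg x₀ hx₀S.1 hx₀0, fun x hx => ?_⟩
  rcases eq_or_ne x 0 with rfl | hx0
  · simp
  have hxn : 0 < ‖x‖ := norm_pos_iff.mpr hx0
  have hmem : ‖x‖⁻¹ • x ∈ S := by
    refine ⟨h.smul_mem hx (by positivity), ?_⟩
    simp [norm_smul, inv_mul_cancel₀ hxn.ne']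
  have := hmin hmem
  simp only [IsMinOn, IsMinFilter] at this
  have h2 : g x₀ ≤ g (‖x‖⁻¹ • x) := this
  rw [map_smul, smul_eq_mul] at h2
  rw [mul_comm]
  calc ‖x‖ * g x₀ ≤ ‖x‖ * (‖x‖⁻¹ * g x) := by
        apply mul_le_mul_of_nonneg_left h2 hxn.le
    _ = g x := by field_simp

end Aux

section Wielandt
variable {W : Type*} [NormedAddCommGroup W] [NormedSpace ℝ W]

/-- Wielandt-style existence of a positive eigenvector for a primitive cone map. -/
lemma exists_eigenvector_interior [FiniteDimensional ℝ W] {D : Set W}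
    (hop : ConeOps D) (hcl : IsClosed D) (hsal : D ∩ (-D) = {0})
    (g : W →L[ℝ] ℝ) (hg : ∀ x ∈ D, x ≠ 0 → 0 < g x)
    (hne : ∃ x ∈ D, x ≠ 0) (Ψ : W →ₗ[ℝ] W) (hpos : ∀ x ∈ D, Ψ x ∈ D)
    {k : ℕ} (hk : 1 ≤ k) (hstrict : ∀ x ∈ D, x ≠ 0 → (Ψ ^ k) x ∈ interior D) :
    ∃ u ∈ interior D, ∃ lam : ℝ, 0 < lam ∧ Ψ u = lam • u := by
  obtain ⟨x₁, hx₁D, hx₁0⟩ := hne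
  have hW : Nontrivial W := nontrivial_of_ne x₁ 0 hx₁0
  have h0D : (0:W) ∈ D := hop.zero_mem hx₁D
  have h0int : (0:W) ∉ interior D := zero_not_mem_interior hsal
  obtain ⟨m, hm, hmg⟩ := strictpos_bound hop hcl g hg ⟨x₁, hx₁D, hx₁0⟩
  have hgnn : ∀ x ∈ D, 0 ≤ g x := fun x hx => le_trans (by positivity) (hmg x hx)
  set Ψc : W →L[ℝ] W := LinearMap.toContinuousLinearMap Ψ with hΨc
  have hΨc_app : ∀ x, Ψc x = Ψ x := fun x => rfl
  set B : ℝ := ‖g.comp Ψc‖ / m with hB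
  -- the feasible set
  set T : Set (ℝ × W) := {p | p.2 ∈ D ∧ g p.2 = 1 ∧ 0 ≤ p.1 ∧ Ψ p.2 - p.1 • p.2 ∈ D} with hT
  have hTnorm : ∀ p ∈ T, ‖p.2‖ ≤ 1 / m := by
    rintro ⟨l, x⟩ ⟨hxD, hgx, -, -⟩
    have := hmg x hxD
    rw [hgx] at this
    rw [div_eq_mul_inv, one_mul, ← one_div, le_div_iff₀ hm, mul_comm]
    exact this
  have hTbd : ∀ p ∈ T, p.1 ≤ B := by
    rintro ⟨l, x⟩ ⟨hxD, hgx, hl, hyD⟩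
    have h1 : 0 ≤ g (Ψ x - l • x) := hgnn _ hyD
    have h2 : l ≤ g (Ψ x) := by
      rw [map_sub, map_smul, smul_eq_mul, hgx, mul_one] at h1
      linarith
    have h3 : g (Ψ x) ≤ ‖g.comp Ψc‖ * ‖x‖ := by
      calc g (Ψ x) ≤ |g (Ψ x)| := le_abs_self _
        _ = ‖(g.comp Ψc) x‖ := by simp [hΨc_app]
        _ ≤ ‖g.comp Ψc‖ * ‖x‖ := (g.comp Ψc).le_opNorm x
    have h4 : ‖x‖ ≤ 1 / m := hTnorm (l, x) ⟨hxD, hgx, hl, hyD⟩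
    have h5 : ‖g.comp Ψc‖ * ‖x‖ ≤ ‖g.comp Ψc‖ * (1/m) :=
      mul_le_mul_of_nonneg_left h4 (norm_nonneg _)
    rw [hB]
    calc l ≤ ‖g.comp Ψc‖ * (1/m) := le_trans h2 (le_trans h3 h5)
      _ = ‖g.comp Ψc‖ / m := by ring
  have hTclosed : IsClosed T := by
    have c1 : IsClosed {p : ℝ × W | p.2 ∈ D} := hcl.preimage continuous_snd
    have c2 : IsClosed {p : ℝ × W | g p.2 = 1} :=
      isClosed_eq (g.continuous.comp continuous_snd) continuous_const
    have c3 : IsClosed {p : ℝ × W | 0 ≤ p.1} := isClosed_le continuous_const continuous_fst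
    have c4 : IsClosed {p : ℝ × W | Ψ p.2 - p.1 • p.2 ∈ D} := by
      have hcont : Continuous fun p : ℝ × W => Ψc p.2 - p.1 • p.2 :=
        ((Ψc.continuous.comp continuous_snd).sub (continuous_fst.smul continuous_snd))
      have : {p : ℝ × W | Ψ p.2 - p.1 • p.2 ∈ D} =
          (fun p : ℝ × W => Ψc p.2 - p.1 • p.2) ⁻¹' D := by
        ext q; simp [hΨc_app]
      rw [this]
      exact hcl.preimage hcont
    have : T = ({p : ℝ × W | p.2 ∈ D} ∩ {p | g p.2 = 1}) ∩
        ({p | 0 ≤ p.1} ∩ {p | Ψ p.2 - p.1 • p.2 ∈ D}) := by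
      ext q
      simp only [hT, mem_setOf_eq, mem_inter_iff]
      tauto
    rw [this]
    exact (c1.inter c2).inter (c3.inter c4)
  have hTsub : T ⊆ (Set.Icc (0:ℝ) B) ×ˢ (closedBall (0:W) (1/m)) := by
    rintro ⟨l, x⟩ hp
    refine ⟨⟨hp.2.2.1, hTbd _ hp⟩, ?_⟩
    simpa [mem_closedBall, dist_eq_norm] using hTnorm _ hp
  have hTcpt : IsCompact T :=
    (isCompact_Icc.prod (isCompact_closedBall 0 (1/m))).of_isClosed_subset hTclosed hTsub
  have hgx₁ : 0 < g x₁ := hg x₁ hx₁D hx₁0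
  have hTne : T.Nonempty := by
    refine ⟨(0, (g x₁)⁻¹ • x₁), hop.smul_mem hx₁D (by positivity), ?_, le_rfl, ?_⟩
    · show g ((g x₁)⁻¹ • x₁) = 1
      rw [map_smul, smul_eq_mul, inv_mul_cancel₀ hgx₁.ne']
    · show Ψ ((g x₁)⁻¹ • x₁) - (0:ℝ) • ((g x₁)⁻¹ • x₁) ∈ D
      simpa using hpos _ (hop.smul_mem hx₁D (by positivity))
  obtain ⟨⟨lam, u⟩, hmemT, hmax⟩ := hTcpt.exists_isMaxOn hTne continuous_fst.continuousOn
  obtain ⟨huD, hgu, hlam0, hyD⟩ := hmemT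
  dsimp only at huD hgu hlam0 hyD
  have hu0 : u ≠ 0 := by
    intro h; rw [h] at hgu; simp at hgu
  -- the eigenvector equation
  have heig : Ψ u = lam • u := by
    by_contra hne'
    set y : W := Ψ u - lam • u with hy
    have hy0 : y ≠ 0 := sub_ne_zero.mpr hne'
    set z : W := (Ψ ^ k) u with hz
    have hzint : z ∈ interior D := hstrict u huD hu0
    have hz0 : z ≠ 0 := fun h => h0int (h ▸ hzint)
    have hkey : (Ψ ^ k) y = Ψ z - lam • z := by
      have hcomm : (Ψ ^ k) (Ψ u) = Ψ ((Ψ ^ k) u) := by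
        calc (Ψ ^ k) (Ψ u) = (Ψ ^ k * Ψ) u := rfl
          _ = (Ψ * Ψ ^ k) u := by rw [((Commute.refl Ψ).pow_left k).eq]
          _ = Ψ ((Ψ ^ k) u) := rfl
      rw [hy, map_sub, map_smul, hcomm, hz]
    have hwint : Ψ z - lam • z ∈ interior D := hkey ▸ hstrict y hyD hy0
    set c : ℝ := g z with hc
    have hc0 : 0 < c := hg z (interior_subset hzint) hz0
    set u' : W := c⁻¹ • z with hu'
    have hu'D : u' ∈ D := hop.smul_mem (interior_subset hzint) (by positivity)
    have hgu' : g u' = 1 := by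
      rw [hu', map_smul, smul_eq_mul, ← hc, inv_mul_cancel₀ hc0.ne']
    have hsint : Ψ u' - lam • u' ∈ interior D := by
      have : Ψ u' - lam • u' = c⁻¹ • (Ψ z - lam • z) := by
        rw [hu', map_smul, smul_comm lam c⁻¹, ← smul_sub]
      rw [this]
      exact smul_interior_mem hop (by positivity) hwint
    -- push a bit more
    have hcont : Continuous fun t : ℝ => (Ψ u' - lam • u') - t • u' := by
      apply Continuous.sub continuous_const
      exact continuous_id.smul continuous_const
    have h0mem : (fun t : ℝ => (Ψ u' - lam • u') - t • u') 0 ∈ interior D := by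
      simpa using hsint
    have hopen : IsOpen ((fun t : ℝ => (Ψ u' - lam • u') - t • u') ⁻¹' interior D) :=
      isOpen_interior.preimage hcont
    rcases Metric.isOpen_iff.mp hopen 0 h0mem with ⟨ε, hε, hball⟩
    have hmem2 : (Ψ u' - lam • u') - (ε/2) • u' ∈ interior D := by
      apply hball
      simp [abs_of_pos hε, Real.dist_eq]
      linarith
    have hT2 : (lam + ε/2, u') ∈ T := by
      refine ⟨hu'D, hgu', by linarith, ?_⟩
      have : Ψ u' - (lam + ε/2) • u' = (Ψ u' - lam • u') - (ε/2) • u' := by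
        rw [add_smul]; abel
      rw [this]
      exact interior_subset hmem2
    have := hmax hT2
    simp only [IsMaxOn, IsMaxFilter] at this
    have h2 : (lam + ε/2 : ℝ) ≤ lam := this
    linarith
  -- positivity of the eigenvalue
  have hpowu : (Ψ ^ k) u = lam ^ k • u := by
    clear hstrict hk
    induction k with
    | zero => simp
    | succ n ih =>
      rw [pow_succ, Module.End.mul_apply, heig, map_smul, ih, smul_smul]
      rw [mul_comm, ← pow_succ]
  have hlampos : 0 < lam := by
    rcases lt_or_eq_of_le hlam0 with h | h
    · exact h
    exfalso
    have : (Ψ ^ k) u ∈ interior D := hstrict u huD hu0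
    rw [hpowu, ← h, zero_pow (by omega), zero_smul] at this
    exact h0int this
  refine ⟨u, ?_, lam, hlampos, heig⟩
  have : u = (lam ^ k)⁻¹ • ((Ψ ^ k) u) := by
    rw [hpowu, smul_smul, inv_mul_cancel₀ (by positivity), one_smul]
  rw [this]
  exact smul_interior_mem hop (by positivity) (hstrict u huD hu0)

end Wielandt

section Sole

lemma sole_span [FiniteDimensional ℝ V] {C : Set V}
    (hop : ConeOps C) (hgen : ∀ v : V, ∃ x ∈ C, ∃ y ∈ C, v = x - y)
    {f : V →L[ℝ] ℝ} (hf : ∀ x ∈ C, x ≠ 0 → 0 < f x) {α : ℝ} (hα : 0 < α)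
    {x₀ : V} (hx₀C : x₀ ∈ C) (hx₀0 : x₀ ≠ 0) :
    ∀ y : V, y ∈ affineSpan ℝ (C ∩ {y | f y = α}) ↔ f y = α := by
  set K := C ∩ {y | f y = α} with hK
  have hfx₀ : 0 < f x₀ := hf x₀ hx₀C hx₀0
  set x₁ : V := (α / f x₀) • x₀ with hx₁
  have hfx₁ : f x₁ = α := by
    rw [hx₁, map_smul, smul_eq_mul, div_mul_cancel₀ _ hfx₀.ne']
  have hx₁K : x₁ ∈ K := ⟨hop.smul_mem hx₀C (by positivity), hfx₁⟩
  intro y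
  constructor
  · intro hy
    have hsub : affineSpan ℝ K ≤ AffineSubspace.mk' x₁ (LinearMap.ker (f : V →ₗ[ℝ] ℝ)) := by
      apply affineSpan_le.mpr
      intro z hz
      rw [SetLike.mem_coe, AffineSubspace.mem_mk']
      simp only [vsub_eq_sub, LinearMap.mem_ker, ContinuousLinearMap.coe_coe, map_sub]
      have : f z = α := hz.2
      rw [this, hfx₁, sub_self]
    have := hsub hy
    rw [AffineSubspace.mem_mk'] at this
    simp only [vsub_eq_sub, LinearMap.mem_ker, ContinuousLinearMap.coe_coe, map_sub] at this
    have : f y = f x₁ := by linarith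
    rw [this, hfx₁]
  · intro hy
    set v : V := y - x₁ with hv
    have hfv : f v = 0 := by rw [hv, map_sub, hy, hfx₁, sub_self]
    have hvmem : v ∈ vectorSpan ℝ K := by
      obtain ⟨a, haC, b, hbC, hab⟩ := hgen v
      have hfab : f a = f b := by
        have : f a - f b = 0 := by rw [← map_sub, ← hab, hfv]
        linarith
      by_cases ha : a = 0
      · have hb : b = 0 := by
          by_contra hb
          have := hf b hbC hb
          rw [← hfab, ha] at this
          simp at this
        have : v = 0 := by rw [hab, ha, hb, sub_zero]
        rw [this]
        exact Submodule.zero_mem _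
      · have hta : 0 < f a := hf a haC ha
        set a' : V := (α / f a) • a with ha'
        set b' : V := (α / f a) • b with hb'
        have ha'K : a' ∈ K := ⟨hop.smul_mem haC (by positivity), by
          show f a' = α
          rw [ha', map_smul, smul_eq_mul, div_mul_cancel₀ _ hta.ne']⟩
        have hb'K : b' ∈ K := ⟨hop.smul_mem hbC (by positivity), by
          show f b' = α
          rw [hb', map_smul, smul_eq_mul, ← hfab, div_mul_cancel₀ _ hta.ne']⟩
        have hveq : v = (f a / α) • (a' -ᵥ b') := by
          rw [vsub_eq_sub, ha', hb', ← smul_sub, smul_smul]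
          rw [div_mul_div_comm, mul_comm (f a) α, ← div_mul_div_comm, div_self hα.ne',
            div_self hta.ne', one_mul, one_smul, hab]
        rw [hveq]
        exact Submodule.smul_mem _ _ (vsub_mem_vectorSpan ℝ ha'K hb'K)
    have hx₁span : x₁ ∈ affineSpan ℝ K := subset_affineSpan ℝ K hx₁K
    have hdir : v ∈ (affineSpan ℝ K).direction := by
      rw [direction_affineSpan]; exact hvmem
    have := AffineSubspace.vadd_mem_of_mem_direction hdir hx₁span
    have heq : v +ᵥ x₁ = y := by
      rw [vadd_eq_add, hv]; abel
    rwa [heq] at this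

lemma sole_intrinsicInterior [FiniteDimensional ℝ V] {C : Set V}
    (hop : ConeOps C) (hgen : ∀ v : V, ∃ x ∈ C, ∃ y ∈ C, v = x - y)
    {f : V →L[ℝ] ℝ} (hf : ∀ x ∈ C, x ≠ 0 → 0 < f x) {α : ℝ} (hα : 0 < α)
    {x₀ : V} (hx₀C : x₀ ∈ C) (hx₀0 : x₀ ≠ 0) :
    intrinsicInterior ℝ (C ∩ {y | f y = α}) = interior C ∩ {y | f y = α} := by
  set K := C ∩ {y | f y = α} with hK
  have hspan := sole_span hop hgen hf hα hx₀C hx₀0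
  apply Subset.antisymm
  · -- hard direction
    rintro y hy
    have hyK : y ∈ K := intrinsicInterior_subset hy
    obtain ⟨yh, hyhint, hyhval⟩ := hy
    refine ⟨?_, hyK.2⟩
    have hfy : f y = α := hyK.2
    obtain ⟨O, hOopen, hOpre⟩ :=
      isOpen_induced_iff.mp (isOpen_interior (s := ((↑) ⁻¹' K : Set (affineSpan ℝ K))))
    have hyO : y ∈ O := by
      have : yh ∈ ((↑) ⁻¹' O : Set (affineSpan ℝ K)) := by rw [hOpre]; exact hyhint
      rwa [mem_preimage, hyhval] at this
    set ρ : V → V := fun w => (α / f w) • w with hρ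
    have hρy : ρ y = y := by
      simp only [hρ, hfy, div_self hα.ne', one_smul]
    have hρcont : ContinuousAt ρ y := by
      apply ContinuousAt.smul _ continuousAt_id
      exact continuousAt_const.div f.continuous.continuousAt (by rw [hfy]; exact hα.ne')
    have hev1 : ∀ᶠ w in 𝓝 y, 0 < f w :=
      (f.continuous.continuousAt (x := y)).eventually
        (eventually_gt_nhds (by rw [hfy]; exact hα))
    have hev2 : ∀ᶠ w in 𝓝 y, ρ w ∈ O :=
      hρcont.eventually_mem (hOopen.mem_nhds (by rw [hρy]; exact hyO))
    have hevC : ∀ᶠ w in 𝓝 y, w ∈ C := by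
      filter_upwards [hev1, hev2] with w h1 h2
      have hfρw : f (ρ w) = α := by
        simp only [hρ, map_smul, smul_eq_mul]
        exact div_mul_cancel₀ _ h1.ne'
      have hρwA : ρ w ∈ affineSpan ℝ K := (hspan _).mpr hfρw
      have : (⟨ρ w, hρwA⟩ : affineSpan ℝ K) ∈ ((↑) ⁻¹' O : Set (affineSpan ℝ K)) := h2
      rw [hOpre] at this
      have hρwK : ρ w ∈ K := by
        have h3 : (⟨ρ w, hρwA⟩ : affineSpan ℝ K) ∈ ((↑) ⁻¹' K : Set (affineSpan ℝ K)) :=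
          interior_subset this
        exact h3
      have hw : w = (f w / α) • ρ w := by
        rw [hρ, smul_smul, div_mul_div_comm, mul_comm (f w) α, ← div_mul_div_comm,
          div_self hα.ne', div_self h1.ne', one_mul, one_smul]
      rw [hw]
      exact hop.smul_mem hρwK.1 (by positivity)
    exact mem_interior_iff_mem_nhds.mpr (by simpa [Filter.eventually_iff, Set.setOf_mem_eq]
      using hevC)
  · rintro y ⟨hyint, hyα⟩
    refine ⟨⟨y, (hspan y).mpr hyα⟩, ?_, rfl⟩
    have hsub : ((↑) ⁻¹' interior C : Set (affineSpan ℝ K)) ⊆ (↑) ⁻¹' K := by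
      rintro z hz
      exact ⟨interior_subset hz, (hspan z.1).mp z.2⟩
    exact interior_maximal hsub (isOpen_interior.preimage continuous_subtype_val) hyint

end Sole

section DualFacts


lemma dual_closed (C : Set V) : IsClosed (dualConeSet C) := by
  have : dualConeSet C = ⋂ (x : V) (_ : x ∈ C), {f : V →L[ℝ] ℝ | 0 ≤ f x} := by
    ext f; simp [dualConeSet, mem_iInter]
  rw [this]
  refine isClosed_iInter fun x => isClosed_iInter fun hx => ?_
  exact isClosed_le continuous_const (ContinuousLinearMap.apply ℝ ℝ x).continuous

lemma dual_coneOps (C : Set V) : ConeOps (dualConeSet C) := by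
  intro g hg h hh s t hs ht x hx
  have := hg x hx; have := hh x hx
  simp only [ContinuousLinearMap.add_apply, ContinuousLinearMap.coe_smul',
    Pi.smul_apply, smul_eq_mul]
  positivity

lemma dual_salient {C : Set V} (hgen : ∀ v : V, ∃ x ∈ C, ∃ y ∈ C, v = x - y) :
    dualConeSet C ∩ (-(dualConeSet C)) = {0} := by
  ext f
  simp only [Set.mem_inter_iff, Set.mem_neg, Set.mem_singleton_iff]
  constructor
  · rintro ⟨h1, h2⟩
    ext v
    obtain ⟨x, hx, y, hy, rfl⟩ := hgen v
    have ha := h1 x hx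
    have hb := h1 y hy
    have hc := h2 x hx
    have hd := h2 y hy
    simp only [ContinuousLinearMap.neg_apply] at hc hd
    simp only [map_sub, ContinuousLinearMap.zero_apply]
    linarith
  · rintro rfl
    exact ⟨fun x _ => le_rfl, fun x _ => by simp⟩

lemma mem_interior_dual_pos {C : Set V} {f : V →L[ℝ] ℝ}
    (hf : f ∈ interior (dualConeSet C)) : ∀ x ∈ C, x ≠ 0 → 0 < f x := by
  intro x hx hx0
  rcases Metric.isOpen_iff.mp isOpen_interior f hf with ⟨δ, hδ, hball⟩
  obtain ⟨g, hgnorm, hgx⟩ := exists_dual_vector ℝ x (norm_ne_zero_iff.mpr hx0)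
  have hmem : f - (δ/2) • g ∈ dualConeSet C := by
    apply interior_subset; apply hball
    simp only [mem_ball, dist_eq_norm]
    have heq : f - (δ/2) • g - f = -((δ/2) • g) := by abel
    rw [heq, norm_neg]
    have h5 : ‖(δ/2) • g‖ = |δ/2| * ‖g‖ := by
      have := norm_smul (δ/2) g
      rwa [Real.norm_eq_abs] at this
    rw [h5, hgnorm, abs_of_pos (half_pos hδ), mul_one]
    linarith
  have := hmem x hx
  simp only [ContinuousLinearMap.sub_apply, ContinuousLinearMap.coe_smul', Pi.smul_apply,
    smul_eq_mul, hgx] at this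
  have hxn : 0 < ‖x‖ := norm_pos_iff.mpr hx0
  simp only [RCLike.ofReal_real_eq_id, id] at this
  nlinarith

lemma pos_mem_interior_dual [FiniteDimensional ℝ V] {C : Set V} (hop : ConeOps C)
    (hcl : IsClosed C) {f : V →L[ℝ] ℝ} (hf : ∀ x ∈ C, x ≠ 0 → 0 < f x)
    (hne : ∃ x ∈ C, x ≠ 0) : f ∈ interior (dualConeSet C) := by
  obtain ⟨m, hm, hmg⟩ := strictpos_bound hop hcl f hf hne
  rw [mem_interior]
  refine ⟨ball f m, ?_, isOpen_ball, mem_ball_self hm⟩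
  intro g hg x hx
  have h1 : m * ‖x‖ ≤ f x := hmg x hx
  have h2 : |g x - f x| ≤ ‖g - f‖ * ‖x‖ := by
    calc |g x - f x| = ‖(g - f) x‖ := by simp
      _ ≤ ‖g - f‖ * ‖x‖ := (g - f).le_opNorm x
  have h3 : ‖g - f‖ < m := by rwa [mem_ball, dist_eq_norm] at hg
  have h4 : ‖g - f‖ * ‖x‖ ≤ m * ‖x‖ := by
    apply mul_le_mul_of_nonneg_right h3.le (norm_nonneg _)
  have := abs_le.mp h2
  linarith [this.1]

lemma exists_interior_point [FiniteDimensional ℝ V] {C : Set V} (hop : ConeOps C)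
    (h0 : (0:V) ∈ C) (hgen : ∀ v : V, ∃ x ∈ C, ∃ y ∈ C, v = x - y) :
    ∃ x₀, x₀ ∈ interior C := by
  have hconv : Convex ℝ C := hop.convex
  rw [← Set.nonempty_def, hconv.interior_nonempty_iff_affineSpan_eq_top]
  have hdir : (affineSpan ℝ C).direction = ⊤ := by
    rw [direction_affineSpan, Submodule.eq_top_iff']
    intro v
    obtain ⟨x, hx, y, hy, rfl⟩ := hgen v
    have := vsub_mem_vectorSpan ℝ hx hy
    rwa [vsub_eq_sub] at this
  have hne : ((affineSpan ℝ C : AffineSubspace ℝ V) : Set V).Nonempty :=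
    ⟨0, subset_affineSpan ℝ C h0⟩
  exact (AffineSubspace.direction_eq_top_iff_of_nonempty hne).mp hdir

lemma exists_nonzero_dual [Nontrivial V] {C : Set V} (hop : ConeOps C)
    (hcl : IsClosed C) (hsal : C ∩ (-C) = {0}) :
    ∃ f ∈ dualConeSet C, f ≠ 0 := by
  have hCne : C ≠ Set.univ := by
    intro hC
    obtain ⟨u, hu⟩ := exists_ne (0:V)
    have : u ∈ C ∩ (-C) := by rw [hC]; exact ⟨trivial, trivial⟩
    rw [hsal] at this
    exact hu this
  obtain ⟨v, hv⟩ : ∃ v : V, v ∉ C := by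
    by_contra h
    push_neg at h
    exact hCne (Set.eq_univ_of_forall h)
  obtain ⟨l, s, hls, hsv⟩ := geometric_hahn_banach_closed_point hop.convex hcl hv
  have h0C : (0:V) ∈ C := by
    have : (0:V) ∈ ({0} : Set V) := rfl
    rw [← hsal] at this
    exact this.1
  have hs0 : 0 < s := by
    have := hls 0 h0C
    simpa using this
  refine ⟨-l, ?_, ?_⟩
  · intro x hx
    simp only [ContinuousLinearMap.neg_apply, le_neg, neg_zero]
    by_contra h
    push_neg at h
    have hmem : ((s+1) / l x) • x ∈ C := (fun hop => hop.smul_mem hx (by positivity)) hop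
    have := hls _ hmem
    rw [map_smul, smul_eq_mul, div_mul_cancel₀ _ h.ne'] at this
    linarith
  · intro h
    have : l v = 0 := by
      have : (-l) v = 0 := by rw [h]; rfl
      simpa [neg_eq_zero] using this
    rw [this] at hsv
    linarith

end DualFacts

section Main

lemma primIndex_congr' {C K : Set V} {Ψ : Module.End ℝ V} {Φ : V →ᵃ[ℝ] V}
    (h : ∀ k : ℕ, 1 ≤ k → ((∀ x ∈ C, x ≠ 0 → (Ψ ^ k) x ∈ interior C) ↔
      (∀ x ∈ K, (⇑Φ)^[k] x ∈ intrinsicInterior ℝ K))) :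
    conePrimIndex C Ψ = affPrimIndex K Φ := by
  have hs : {k : ℕ | 1 ≤ k ∧ ∀ x ∈ C, x ≠ 0 → (Ψ ^ k) x ∈ interior C} =
      {k : ℕ | 1 ≤ k ∧ ∀ x ∈ K, (⇑Φ)^[k] x ∈ intrinsicInterior ℝ K} :=
    Set.ext fun k =>
      ⟨fun ⟨h1, h2⟩ => ⟨h1, (h k h1).mp h2⟩, fun ⟨h1, h2⟩ => ⟨h1, (h k h1).mpr h2⟩⟩
  rw [conePrimIndex, affPrimIndex, hs]

theorem maximal_exponent_eq_sup_over_soles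
    [FiniteDimensional ℝ V] (C : Set V) (hC : IsProperCone C) :
    sSup {N : ℕ∞ | ∃ Ψ : Module.End ℝ V, (∀ x ∈ C, Ψ x ∈ C) ∧
        (∃ k : ℕ, 1 ≤ k ∧ ∀ x ∈ C, x ≠ 0 → (Ψ ^ k) x ∈ interior C) ∧
        N = conePrimIndex C Ψ} =
    sSup {N : ℕ∞ | ∃ f ∈ interior (dualConeSet C), ∃ α : ℝ, 0 < α ∧
        ∃ Φ : V →ᵃ[ℝ] V,
          (∀ x : V, f x = α → f (Φ x) = α) ∧
          (∀ x ∈ C ∩ {y | f y = α}, Φ x ∈ C ∩ {y | f y = α}) ∧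
          (∃ k : ℕ, 1 ≤ k ∧ ∀ x ∈ C ∩ {y | f y = α},
            (⇑Φ)^[k] x ∈ intrinsicInterior ℝ (C ∩ {y | f y = α})) ∧
          N = affPrimIndex (C ∩ {y | f y = α}) Φ} := by
  obtain ⟨hop', hcl, hsal, hgen⟩ := hC
  have hop : ConeOps C := hop'
  have h0C : (0:V) ∈ C := by
    obtain ⟨x, hx, y, hy, -⟩ := hgen 0
    exact hop.zero_mem hx
  rcases subsingleton_or_nontrivial V with hV | hV
  · -- trivial case: both sides are 1
    have hcone1 : ∀ Ψ : Module.End ℝ V, conePrimIndex C Ψ = 1 := by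
      intro Ψ
      apply le_antisymm
      · apply sInf_le
        exact ⟨1, ⟨le_rfl, fun x _ hx0 => absurd (Subsingleton.elim x 0) hx0⟩, rfl⟩
      · apply le_sInf
        rintro b ⟨k, ⟨hk, -⟩, rfl⟩
        exact_mod_cast hk
    have haff1 : ∀ (f : V →L[ℝ] ℝ) (α : ℝ), 0 < α → ∀ Φ : V →ᵃ[ℝ] V,
        affPrimIndex (C ∩ {y | f y = α}) Φ = 1 := by
      intro f α hα Φ
      have hKempty : ∀ x, x ∉ C ∩ {y | f y = α} := by
        rintro x ⟨-, hx2⟩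
        have : f x = α := hx2
        rw [Subsingleton.elim x 0, map_zero] at this
        exact hα.ne this
      apply le_antisymm
      · apply sInf_le
        exact ⟨1, ⟨le_rfl, fun x hx => absurd hx (hKempty x)⟩, rfl⟩
      · apply le_sInf
        rintro b ⟨k, ⟨hk, -⟩, rfl⟩
        exact_mod_cast hk
    have hdual : dualConeSet C = Set.univ := by
      ext g
      simp only [Set.mem_univ, iff_true]
      intro x _
      rw [Subsingleton.elim x 0, map_zero]
    have hL : sSup {N : ℕ∞ | ∃ Ψ : Module.End ℝ V, (∀ x ∈ C, Ψ x ∈ C) ∧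
        (∃ k : ℕ, 1 ≤ k ∧ ∀ x ∈ C, x ≠ 0 → (Ψ ^ k) x ∈ interior C) ∧
        N = conePrimIndex C Ψ} = 1 := by
      apply le_antisymm
      · apply sSup_le
        rintro N ⟨Ψ, -, -, rfl⟩
        rw [hcone1]
      · apply le_sSup
        refine ⟨1, fun x hx => by simpa using hx, ⟨1, le_rfl,
          fun x _ hx0 => absurd (Subsingleton.elim x 0) hx0⟩, (hcone1 1).symm⟩
    have hR : sSup {N : ℕ∞ | ∃ f ∈ interior (dualConeSet C), ∃ α : ℝ, 0 < α ∧
        ∃ Φ : V →ᵃ[ℝ] V,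
          (∀ x : V, f x = α → f (Φ x) = α) ∧
          (∀ x ∈ C ∩ {y | f y = α}, Φ x ∈ C ∩ {y | f y = α}) ∧
          (∃ k : ℕ, 1 ≤ k ∧ ∀ x ∈ C ∩ {y | f y = α},
            (⇑Φ)^[k] x ∈ intrinsicInterior ℝ (C ∩ {y | f y = α})) ∧
          N = affPrimIndex (C ∩ {y | f y = α}) Φ} = 1 := by
      apply le_antisymm
      · apply sSup_le
        rintro N ⟨f, -, α, hα, Φ, -, -, -, rfl⟩
        rw [haff1 f α hα]
      · apply le_sSup
        refine ⟨0, by rw [hdual, interior_univ]; trivial, 1, one_pos, AffineMap.id ℝ V,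
          ?_, ?_, ⟨1, le_rfl, ?_⟩, (haff1 0 1 one_pos _).symm⟩
        · intro x hx
          simp at hx
        · rintro x ⟨-, hx2⟩
          have : (0 : V →L[ℝ] ℝ) x = 1 := hx2
          simp at this
        · rintro x ⟨-, hx2⟩
          have : (0 : V →L[ℝ] ℝ) x = 1 := hx2
          simp at this
    rw [hL, hR]
  -- nontrivial case
  have hneC : ∃ x ∈ C, x ≠ 0 := by
    obtain ⟨v, hv⟩ := exists_ne (0:V)
    obtain ⟨x, hx, y, hy, hxy⟩ := hgen v
    rcases eq_or_ne x 0 with rfl | hx0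
    · refine ⟨y, hy, ?_⟩
      intro h
      rw [h] at hxy
      simp at hxy
      exact hv hxy
    · exact ⟨x, hx, hx0⟩
  obtain ⟨x₀, hx₀int⟩ := exists_interior_point hop h0C hgen
  have hx₀0 : x₀ ≠ 0 := fun h => zero_not_mem_interior hsal (h ▸ hx₀int)
  have hx₀C : x₀ ∈ C := interior_subset hx₀int
  apply le_antisymm
  · -- LHS ≤ RHS : eigenfunctional construction
    apply sSup_le
    rintro N ⟨Ψ, hΨpos, ⟨k₀, hk₀, hk₀s⟩, rfl⟩
    -- the adjoint map
    set Ψc : V →L[ℝ] V := LinearMap.toContinuousLinearMap (Ψ : V →ₗ[ℝ] V) with hΨcdef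
    have hΨc_app : ∀ x, Ψc x = Ψ x := fun _ => rfl
    set Ψd : (V →L[ℝ] ℝ) →ₗ[ℝ] (V →L[ℝ] ℝ) :=
      { toFun := fun f => f.comp Ψc
        map_add' := fun f g => ContinuousLinearMap.add_comp _ _ _
        map_smul' := fun c f => ContinuousLinearMap.smul_comp _ _ _ } with hΨddef
    have hΨd_app : ∀ (f : V →L[ℝ] ℝ) (x : V), (Ψd f) x = f (Ψ x) := fun _ _ => rfl
    have hΨd_pow : ∀ (n : ℕ) (f : V →L[ℝ] ℝ) (x : V), ((Ψd ^ n) f) x = f ((Ψ ^ n) x) := by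
      intro n
      induction n with
      | zero => intro f x; simp
      | succ n ih =>
        intro f x
        rw [pow_succ, Module.End.mul_apply, ih (Ψd f) x, hΨd_app]
        congr 1
        rw [pow_succ', Module.End.mul_apply]
    -- dual cone data
    have hDop : ConeOps (dualConeSet C) := dual_coneOps C
    have hDcl : IsClosed (dualConeSet C) := dual_closed C
    have hDsal : dualConeSet C ∩ (-(dualConeSet C)) = {0} := dual_salient hgen
    set g : (V →L[ℝ] ℝ) →L[ℝ] ℝ := ContinuousLinearMap.apply ℝ ℝ x₀ with hgdef
    have hg : ∀ f ∈ dualConeSet C, f ≠ 0 → 0 < g f := fun f hf hf0 =>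
      pos_on_interior hf hf0 hx₀int
    have hDne : ∃ f ∈ dualConeSet C, f ≠ 0 := exists_nonzero_dual hop hcl hsal
    have hΨdpos : ∀ f ∈ dualConeSet C, Ψd f ∈ dualConeSet C := by
      intro f hf x hx
      rw [hΨd_app]
      exact hf _ (hΨpos x hx)
    have hΨdstrict : ∀ f ∈ dualConeSet C, f ≠ 0 → (Ψd ^ k₀) f ∈ interior (dualConeSet C) := by
      intro f hf hf0
      apply pos_mem_interior_dual hop hcl _ hneC
      intro x hx hx0
      rw [hΨd_pow]
      exact pos_on_interior hf hf0 (hk₀s x hx hx0)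
    obtain ⟨fs, hfsint, lam, hlam, hfseig⟩ :=
      exists_eigenvector_interior hDop hDcl hDsal g hg hDne Ψd hΨdpos hk₀ hΨdstrict
    have hfspos : ∀ x ∈ C, x ≠ 0 → 0 < fs x := mem_interior_dual_pos hfsint
    have hfseig' : ∀ x, fs (Ψ x) = lam * fs x := by
      intro x
      have := congrArg (fun h : V →L[ℝ] ℝ => h x) hfseig
      simpa [hΨd_app] using this
    have hfspow : ∀ (n : ℕ) (x : V), fs ((Ψ ^ n) x) = lam ^ n * fs x := by
      intro n
      induction n with
      | zero => intro x; simp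
      | succ n ih =>
        intro x
        rw [pow_succ', Module.End.mul_apply, hfseig', ih, pow_succ]
        ring
    set K := C ∩ {y | fs y = 1} with hKdef
    have hintr : intrinsicInterior ℝ K = interior C ∩ {y | fs y = 1} :=
      sole_intrinsicInterior hop hgen hfspos one_pos hx₀C hx₀0
    set Φ : V →ᵃ[ℝ] V := (lam⁻¹ • (Ψ : V →ₗ[ℝ] V)).toAffineMap with hΦdef
    have hΦapp : ∀ x, Φ x = lam⁻¹ • Ψ x := fun x => rfl
    have hΦiter : ∀ (n : ℕ) (x : V), (⇑Φ)^[n] x = (lam⁻¹) ^ n • (Ψ ^ n) x := by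
      intro n
      induction n with
      | zero => intro x; simp
      | succ n ih =>
        intro x
        rw [Function.iterate_succ_apply', ih, hΦapp, map_smul, smul_smul, pow_succ,
          pow_succ', Module.End.mul_apply]
        rw [mul_comm (lam⁻¹ ^ n) lam⁻¹]
    -- the two strictness conditions agree
    have hsetiff : ∀ k : ℕ, 1 ≤ k → ((∀ x ∈ C, x ≠ 0 → (Ψ ^ k) x ∈ interior C) ↔
        (∀ x ∈ K, (⇑Φ)^[k] x ∈ intrinsicInterior ℝ K)) := by
      intro k _
      constructor
      · intro hcone x hxK
        have hx0 : x ≠ 0 := by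
          intro h
          have : fs x = 1 := hxK.2
          rw [h, map_zero] at this
          exact one_ne_zero this.symm
        rw [hΦiter, hintr]
        constructor
        · exact smul_interior_mem hop (by positivity) (hcone x hxK.1 hx0)
        · show fs ((lam⁻¹) ^ k • (Ψ ^ k) x) = 1
          rw [map_smul, smul_eq_mul, hfspow]
          have : fs x = 1 := hxK.2
          rw [this, mul_one, ← mul_pow, inv_mul_cancel₀ hlam.ne', one_pow]
      · intro haff x hxC hx0
        have ht : 0 < fs x := hfspos x hxC hx0
        set x' : V := (fs x)⁻¹ • x with hx'def
        have hx'K : x' ∈ K := by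
          constructor
          · exact hop.smul_mem hxC (by positivity)
          · show fs x' = 1
            rw [hx'def, map_smul, smul_eq_mul, inv_mul_cancel₀ ht.ne']
        have := haff x' hx'K
        rw [hΦiter, hintr] at this
        have hx'int : (lam⁻¹) ^ k • (Ψ ^ k) x' ∈ interior C := this.1
        have heq : (Ψ ^ k) x = (fs x * lam ^ k) • ((lam⁻¹) ^ k • (Ψ ^ k) x') := by
          rw [hx'def, map_smul, smul_smul, smul_smul]
          have hco : fs x * lam ^ k * lam⁻¹ ^ k * (fs x)⁻¹ = 1 := by
            rw [inv_pow]
            field_simp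
            try ring
          rw [hco, one_smul]
        rw [heq]
        exact smul_interior_mem hop (by positivity) hx'int
    apply le_sSup
    refine ⟨fs, hfsint, 1, one_pos, Φ, ?_, ?_, ?_, primIndex_congr' hsetiff⟩
    · intro x hx
      rw [hΦapp, map_smul, smul_eq_mul, hfseig', hx]
      rw [← mul_assoc, inv_mul_cancel₀ hlam.ne', one_mul]
    · rintro x ⟨hxC, hxα⟩
      have hx0 : x ≠ 0 := by
        intro h
        have : fs x = 1 := hxα
        rw [h, map_zero] at this
        exact one_ne_zero this.symm
      constructor
      · rw [hΦapp]
        exact hop.smul_mem (hΨpos x hxC) (by positivity)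
      · show fs (Φ x) = 1
        rw [hΦapp, map_smul, smul_eq_mul, hfseig']
        have : fs x = 1 := hxα
        rw [this, mul_one, inv_mul_cancel₀ hlam.ne']
    · exact ⟨k₀, hk₀, (hsetiff k₀ hk₀).mp hk₀s⟩
  · -- RHS ≤ LHS : homogenization
    apply sSup_le
    rintro N ⟨f, hfint, α, hα, Φ, h1, h2, ⟨k₀, hk₀, hk₀s⟩, rfl⟩
    have hfpos : ∀ x ∈ C, x ≠ 0 → 0 < f x := mem_interior_dual_pos hfint
    set K := C ∩ {y | f y = α} with hKdef
    have hintr : intrinsicInterior ℝ K = interior C ∩ {y | f y = α} :=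
      sole_intrinsicInterior hop hgen hfpos hα hx₀C hx₀0
    set b : V := Φ 0 with hbdef
    set Ψ : Module.End ℝ V := Φ.linear + α⁻¹ • ((f : V →ₗ[ℝ] ℝ).smulRight b) with hΨdef
    have hΨapp : ∀ x, Ψ x = Φ.linear x + (α⁻¹ * f x) • b := by
      intro x
      show Φ.linear x + (α⁻¹ • ((f : V →ₗ[ℝ] ℝ).smulRight b)) x = _
      rw [LinearMap.smul_apply, LinearMap.smulRight_apply]
      simp only [ContinuousLinearMap.coe_coe, smul_smul, smul_eq_mul]
    have hΨH : ∀ x, f x = α → Ψ x = Φ x := by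
      intro x hx
      rw [hΨapp, hx, inv_mul_cancel₀ hα.ne', one_smul]
      have := AffineMap.decomp Φ
      have h5 : Φ x = Φ.linear x + Φ 0 := by
        conv_lhs => rw [show Φ x = (⇑Φ) x from rfl, this]
        rfl
      rw [h5, hbdef]
    have hΨiter : ∀ (n : ℕ) (x : V), f x = α → ((Ψ ^ n) x = (⇑Φ)^[n] x ∧ f ((Ψ ^ n) x) = α) := by
      intro n
      induction n with
      | zero => intro x hx; exact ⟨rfl, hx⟩
      | succ n ih =>
        intro x hx
        obtain ⟨ih1, ih2⟩ := ih x hx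
        constructor
        · rw [pow_succ', Module.End.mul_apply, ih1, Function.iterate_succ_apply']
          apply hΨH
          rw [← ih1]
          exact ih2
        · rw [pow_succ', Module.End.mul_apply, ih1, hΨH _ (by rw [← ih1]; exact ih2)]
          apply h1
          rw [← ih1]
          exact ih2
    have hΨpos : ∀ x ∈ C, Ψ x ∈ C := by
      intro x hxC
      rcases eq_or_ne x 0 with rfl | hx0
      · rw [map_zero]; exact h0C
      · have ht : 0 < f x := hfpos x hxC hx0
        set x' : V := (α / f x) • x with hx'def
        have hx'K : x' ∈ K := by
          refine ⟨hop.smul_mem hxC (by positivity), ?_⟩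
          show f x' = α
          rw [hx'def, map_smul, smul_eq_mul, div_mul_cancel₀ _ ht.ne']
        have hfx' : f x' = α := hx'K.2
        have hsc : Ψ x = (f x / α) • Ψ x' := by
          rw [hx'def, map_smul, smul_smul, div_mul_div_comm, mul_comm (f x) α,
            ← div_mul_div_comm, div_self hα.ne', div_self ht.ne', one_mul, one_smul]
        rw [hsc, hΨH _ hfx']
        exact hop.smul_mem (h2 x' hx'K).1 (by positivity)
    have hsetiff : ∀ k : ℕ, 1 ≤ k → ((∀ x ∈ C, x ≠ 0 → (Ψ ^ k) x ∈ interior C) ↔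
        (∀ x ∈ K, (⇑Φ)^[k] x ∈ intrinsicInterior ℝ K)) := by
      intro k _
      constructor
      · intro hcone x hxK
        have hx0 : x ≠ 0 := by
          intro h
          have : f x = α := hxK.2
          rw [h, map_zero] at this
          exact hα.ne this
        obtain ⟨hi1, hi2⟩ := hΨiter k x hxK.2
        rw [← hi1, hintr]
        exact ⟨hcone x hxK.1 hx0, hi2⟩
      · intro haff x hxC hx0
        have ht : 0 < f x := hfpos x hxC hx0
        set x' : V := (α / f x) • x with hx'def
        have hx'K : x' ∈ K := by
          refine ⟨hop.smul_mem hxC (by positivity), ?_⟩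
          show f x' = α
          rw [hx'def, map_smul, smul_eq_mul, div_mul_cancel₀ _ ht.ne']
        obtain ⟨hi1, -⟩ := hΨiter k x' hx'K.2
        have := haff x' hx'K
        rw [← hi1, hintr] at this
        have hsc : (Ψ ^ k) x = (f x / α) • (Ψ ^ k) x' := by
          rw [hx'def, map_smul, smul_smul, div_mul_div_comm, mul_comm (f x) α,
            ← div_mul_div_comm, div_self hα.ne', div_self ht.ne', one_mul, one_smul]
        rw [hsc]
        exact smul_interior_mem hop (by positivity) this.1
    apply le_sSup
    exact ⟨Ψ, hΨpos, ⟨k₀, hk₀, (hsetiff k₀ hk₀).mpr hk₀s⟩, (primIndex_congr' hsetiff).symm⟩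

end Main
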